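/- Equivalence of the two quantum forms of Landauer's erasure principle (Theorem 3, (ii) ⇔ (iii)): let A be a finite nonempty type, Q : Matrix A A ℂ Hermitian, and b > 0. Then (Matrix.trace (exp (-b • Q))).re < 1 if and only if for every density matrix ρ on A, (Matrix.trace (ρ * Q)).re > b⁻¹ * S(ρ). -/

import Mathlib

open Matrix Kronecker
open scoped ComplexOrder

noncomputable section

/-- A density matrix: positive semidefinite with trace 1. -/
def IsDensityMatrix {ι : Type*} [Fintype ι] (ρ : Matrix ι ι ℂ) : Prop :=
  ρ.PosSemidef ∧ ρ.trace = 1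

/-- The matrix exponential. -/
noncomputable def mexp {ι : Type*} [Fintype ι] [DecidableEq ι] (M : Matrix ι ι ℂ) :
    Matrix ι ι ℂ :=
  NormedSpace.exp M

/-- Von Neumann entropy of a (Hermitian) matrix, via its eigenvalues. -/
noncomputable def vnEntropy {ι : Type*} [Fintype ι] [DecidableEq ι] (ρ : Matrix ι ι ℂ) : ℝ :=
  if h : ρ.IsHermitian then -∑ i, h.eigenvalues i * Real.log (h.eigenvalues i) else 0

/-- The Gibbs state of the Hamiltonian `H` at inverse temperature `b`. -/
noncomputable def gibbs {ι : Type*} [Fintype ι] [DecidableEq ι] (H : Matrix ι ι ℂ) (b : ℝ) :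
    Matrix ι ι ℂ :=
  (Matrix.trace (mexp (-b • H)))⁻¹ • mexp (-b • H)

/-- Equilibrium energy of the bath. -/
noncomputable def eqEnergy {ι : Type*} [Fintype ι] [DecidableEq ι] (H : Matrix ι ι ℂ) (b : ℝ) : ℝ :=
  (Matrix.trace (gibbs H b * H)).re

/-- Partial trace over the second (bath) factor. -/
def ptraceB {A B : Type*} [Fintype B] (M : Matrix (A × B) (A × B) ℂ) : Matrix A A ℂ :=
  Matrix.of fun a a' => ∑ k : B, M (a, k) (a', k)

/-- Partial trace over the first (device) factor. -/
def ptraceA {A B : Type*} [Fintype A] (M : Matrix (A × B) (A × B) ℂ) : Matrix B B ℂ :=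
  Matrix.of fun k k' => ∑ a : A, M (a, k) (a, k')

/-- The heat transfer operator of a realization setup. -/
noncomputable def hto {A B : Type*} [Fintype A] [DecidableEq A] [Fintype B] [DecidableEq B]
    (H_B : Matrix B B ℂ) (b : ℝ) (U : Matrix (A × B) (A × B) ℂ) : Matrix A A ℂ :=
  ptraceB (((1 : Matrix A A ℂ) ⊗ₖ gibbs H_B b) * Uᴴ * ((1 : Matrix A A ℂ) ⊗ₖ H_B) * U)
    - eqEnergy H_B b • (1 : Matrix A A ℂ)

/-- Matrix logarithm of a Hermitian matrix through the continuous functional calculus. -/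
noncomputable def mlog {ι : Type*} [Fintype ι] [DecidableEq ι] (ρ : Matrix ι ι ℂ) :
    Matrix ι ι ℂ :=
  if h : ρ.IsHermitian then h.cfc Real.log else 0

/-- Quantum relative entropy `S(σ‖ρ)`. -/
noncomputable def relEntropy {ι : Type*} [Fintype ι] [DecidableEq ι] (σ ρ : Matrix ι ι ℂ) : ℝ :=
  (Matrix.trace (σ * (mlog σ - mlog ρ))).re

end

section AuxLandauer

open Matrix Polynomial

variable {n : Type*} [Fintype n] [DecidableEq n]

lemma aux_charpoly_conj (U D : Matrix n n ℂ) (h1 : U * Uᴴ = 1) :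
    (U * D * Uᴴ).charpoly = D.charpoly := by
  have hmap : (C : ℂ →+* ℂ[X]).mapMatrix U * (C : ℂ →+* ℂ[X]).mapMatrix Uᴴ = 1 := by
    rw [← _root_.map_mul, h1, _root_.map_one]
  have hscal : ∀ M : Matrix n n ℂ[X], M * Matrix.scalar n (X : ℂ[X]) =
      Matrix.scalar n (X : ℂ[X]) * M :=
    fun M => (scalar_commute (X : ℂ[X]) (fun r => Commute.all _ _) M).symm
  have hc : charmatrix (U * D * Uᴴ) =
      (C : ℂ →+* ℂ[X]).mapMatrix U * charmatrix D * (C : ℂ →+* ℂ[X]).mapMatrix Uᴴ := by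
    rw [charmatrix, charmatrix, mul_sub, sub_mul]
    congr 1
    · rw [hscal, mul_assoc, hmap, mul_one]
    · rw [← _root_.map_mul, ← _root_.map_mul]
  have hmap' : (C : ℂ →+* ℂ[X]).mapMatrix Uᴴ * (C : ℂ →+* ℂ[X]).mapMatrix U = 1 :=
    mul_eq_one_comm.mp hmap
  rw [Matrix.charpoly, Matrix.charpoly, hc, det_mul, det_mul, mul_comm, ← mul_assoc,
    ← det_mul, hmap', det_one, one_mul]

lemma aux_charpoly_diagonal (d : n → ℂ) :
    (Matrix.diagonal d).charpoly = ∏ i, (X - C (d i)) := by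
  have h : charmatrix (Matrix.diagonal d) = Matrix.diagonal fun i => X - C (d i) := by
    ext i j
    by_cases h : i = j
    · subst h; simp [charmatrix_apply, Matrix.diagonal_apply_eq]
    · simp [charmatrix_apply_ne _ _ _ h, Matrix.diagonal_apply_ne _ h]
  rw [Matrix.charpoly, h, det_diagonal]

lemma aux_eig_multiset {M : Matrix n n ℂ} (hM : M.IsHermitian) (U : Matrix n n ℂ)
    (h1 : U * Uᴴ = 1) (d : n → ℝ)
    (hMd : M = U * Matrix.diagonal (fun i => (d i : ℂ)) * Uᴴ) :
    Multiset.map hM.eigenvalues Finset.univ.val = Multiset.map d Finset.univ.val := by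
  have key : ∀ (V : Matrix n n ℂ) (e : n → ℝ), V * Vᴴ = 1 →
      M = V * Matrix.diagonal (fun i => (e i : ℂ)) * Vᴴ →
      M.charpoly.roots = Multiset.map (fun i => ((e i : ℂ))) Finset.univ.val := by
    intro V e hV hMe
    rw [hMe, aux_charpoly_conj _ _ hV, aux_charpoly_diagonal]
    rw [show ∏ i, (X - C ((e i : ℂ))) =
        ((Multiset.map (fun i => ((e i : ℂ))) Finset.univ.val).map fun a => X - C a).prod by
      rw [Multiset.map_map]; rfl]
    exact roots_multiset_prod_X_sub_C _
  have hspec := hM.spectral_theorem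
  have hW : (hM.eigenvectorUnitary : Matrix n n ℂ) * (hM.eigenvectorUnitary : Matrix n n ℂ)ᴴ = 1 := by
    have := Matrix.mem_unitaryGroup_iff.mp hM.eigenvectorUnitary.2
    rw [Matrix.star_eq_conjTranspose] at this
    exact this
  have h2 := key _ _ hW hspec
  have h3 := key _ _ h1 hMd
  have h4 : Multiset.map (fun i => ((hM.eigenvalues i : ℂ))) Finset.univ.val =
      Multiset.map (fun i => ((d i : ℂ))) Finset.univ.val := h2 ▸ h3 ▸ rfl
  have h5 := congrArg (Multiset.map (fun z : ℂ => z.re)) h4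
  simpa [Multiset.map_map, Function.comp] using h5

lemma aux_sum_eig {M : Matrix n n ℂ} (hM : M.IsHermitian) (U : Matrix n n ℂ)
    (h1 : U * Uᴴ = 1) (d : n → ℝ)
    (hMd : M = U * Matrix.diagonal (fun i => (d i : ℂ)) * Uᴴ) (f : ℝ → ℝ) :
    ∑ i, f (hM.eigenvalues i) = ∑ i, f (d i) := by
  have h2 : ∀ g : n → ℝ, ∑ i, g i = (Multiset.map g Finset.univ.val).sum := fun g => rfl
  rw [h2, h2, show (fun i => f (hM.eigenvalues i)) = f ∘ hM.eigenvalues from rfl,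
    show (fun i => f (d i)) = f ∘ d from rfl, ← Multiset.map_map, ← Multiset.map_map,
    aux_eig_multiset hM U h1 d hMd]

lemma aux_exp_conj (U : Matrix n n ℂ) (h1 : U * Uᴴ = 1) (d : n → ℂ) :
    NormedSpace.exp (U * Matrix.diagonal d * Uᴴ) =
      U * Matrix.diagonal (fun i => Complex.exp (d i)) * Uᴴ := by
  have hUnit : IsUnit U := ⟨⟨U, Uᴴ, h1, mul_eq_one_comm.mp h1⟩, rfl⟩
  have hinv : U⁻¹ = Uᴴ := Matrix.inv_eq_right_inv h1
  rw [← hinv, Matrix.exp_conj U _ hUnit, Matrix.exp_diagonal, hinv]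
  congr 2
  ext i
  rw [Pi.exp_def, Complex.exp_eq_exp_ℂ]

lemma aux_trace_conj' (U : Matrix n n ℂ) (X : Matrix n n ℂ) (h1 : U * Uᴴ = 1) :
    Matrix.trace (U * X * Uᴴ) = Matrix.trace X := by
  rw [Matrix.trace_mul_cycle, mul_eq_one_comm.mp h1, Matrix.one_mul]

lemma aux_trace_conj (U : Matrix n n ℂ) (h1 : U * Uᴴ = 1) (d : n → ℂ) :
    Matrix.trace (U * Matrix.diagonal d * Uᴴ) = ∑ i, d i := by
  rw [Matrix.trace_mul_cycle, mul_eq_one_comm.mp h1, Matrix.one_mul,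
    Matrix.trace_diagonal]
open scoped ComplexOrder
variable {n : Type*} [Fintype n] [DecidableEq n]

lemma aux_spectral {M : Matrix n n ℂ} (hM : M.IsHermitian) :
    M = (hM.eigenvectorUnitary : Matrix n n ℂ) *
      Matrix.diagonal (fun i => ((hM.eigenvalues i : ℝ) : ℂ)) *
      (hM.eigenvectorUnitary : Matrix n n ℂ)ᴴ :=
  hM.spectral_theorem

lemma aux_unitary {M : Matrix n n ℂ} (hM : M.IsHermitian) :
    (hM.eigenvectorUnitary : Matrix n n ℂ) * (hM.eigenvectorUnitary : Matrix n n ℂ)ᴴ = 1 := by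
  have := Matrix.mem_unitaryGroup_iff.mp hM.eigenvectorUnitary.2
  rw [Matrix.star_eq_conjTranspose] at this; exact this

lemma aux_gibbs_term {pp cc : ℝ} (hp : 0 ≤ pp) (hc : 0 < cc) :
    pp - cc ≤ pp * (Real.log pp - Real.log cc) := by
  rcases eq_or_lt_of_le hp with h | h
  · simp [← h, hc.le]
  · have h2 := Real.log_le_sub_one_of_pos (div_pos hc h)
    rw [Real.log_div hc.ne' h.ne'] at h2
    have h3 := mul_le_mul_of_nonneg_left h2 h.le
    have h4 : pp * (cc / pp) = cc := by field_simp
    nlinarith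

open scoped ComplexOrder

end AuxLandauer

/-- Equivalence of the two quantum forms of Landauer's erasure principle. -/
theorem landauer_two_forms_equivalence
    {A : Type*} [Fintype A] [DecidableEq A] [Nonempty A]
    (Q : Matrix A A ℂ) (hQ : Q.IsHermitian) {b : ℝ} (hb : 0 < b) :
    (Matrix.trace (mexp (-b • Q))).re < 1 ↔
      ∀ ρ : Matrix A A ℂ, IsDensityMatrix ρ →
        (Matrix.trace (ρ * Q)).re > b⁻¹ * vnEntropy ρ := by
  classical
  set W : Matrix A A ℂ := (hQ.eigenvectorUnitary : Matrix A A ℂ) with hWdef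
  have hWu : W * Wᴴ = 1 := aux_unitary hQ
  set q : A → ℝ := hQ.eigenvalues with hqdef
  have hQspec : Q = W * Matrix.diagonal (fun i => (q i : ℂ)) * Wᴴ := aux_spectral hQ
  set Z : ℝ := ∑ j, Real.exp (-b * q j) with hZdef
  have hZpos : 0 < Z := Finset.sum_pos (fun j _ => Real.exp_pos _) Finset.univ_nonempty
  -- the diagonal form of -b • Q
  have hmbQ : -b • Q = W * Matrix.diagonal (fun i => ((-b * q i : ℝ) : ℂ)) * Wᴴ := by
    rw [hQspec, ← Matrix.smul_mul, ← Matrix.mul_smul]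
    congr 2
    ext i j
    by_cases h : i = j
    · subst h
      simp only [Matrix.smul_apply, Matrix.diagonal_apply_eq]
      rw [Complex.real_smul]
      push_cast
      ring
    · simp [Matrix.diagonal_apply_ne _ h]
  have hexp : mexp (-b • Q) =
      W * Matrix.diagonal (fun j => ((Real.exp (-b * q j) : ℝ) : ℂ)) * Wᴴ := by
    rw [mexp, hmbQ, aux_exp_conj _ hWu]
    have h2 : (fun i => Complex.exp ((-b * q i : ℝ) : ℂ)) =
        fun j => ((Real.exp (-b * q j) : ℝ) : ℂ) := by
      funext j; rw [← Complex.ofReal_exp]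
    rw [h2]
  have htrace : (Matrix.trace (mexp (-b • Q))).re = Z := by
    rw [hexp, aux_trace_conj _ hWu]
    rw [show (∑ j, ((Real.exp (-b * q j) : ℝ) : ℂ)) = ((Z : ℝ) : ℂ) by
      rw [hZdef]; push_cast; rfl]
    exact Complex.ofReal_re _
  rw [htrace]
  constructor
  · -- (ii) → (iii)
    intro hZ1 ρ hρ
    obtain ⟨hρpsd, hρtr⟩ := hρ
    have hρH : ρ.IsHermitian := hρpsd.1
    set U : Matrix A A ℂ := (hρH.eigenvectorUnitary : Matrix A A ℂ) with hUdef
    have hUu : U * Uᴴ = 1 := aux_unitary hρH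
    set p : A → ℝ := hρH.eigenvalues with hpdef
    have hρspec : ρ = U * Matrix.diagonal (fun i => (p i : ℂ)) * Uᴴ := aux_spectral hρH
    have hp0 : ∀ i, 0 ≤ p i := fun i => hρpsd.eigenvalues_nonneg i
    have hp1 : ∑ i, p i = 1 := by
      have h1 := aux_trace_conj U hUu (fun i => (p i : ℂ))
      rw [← hρspec, hρtr] at h1
      exact_mod_cast h1.symm
    set M : Matrix A A ℂ := Wᴴ * U with hMdef
    have hMH : Mᴴ = Uᴴ * W := by
      rw [hMdef, Matrix.conjTranspose_mul, Matrix.conjTranspose_conjTranspose]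
    have hM1 : Mᴴ * M = 1 := by
      rw [hMH, hMdef, Matrix.mul_assoc, ← Matrix.mul_assoc W, hWu, Matrix.one_mul,
        mul_eq_one_comm.mp hUu]
    have hM2 : M * Mᴴ = 1 := by
      rw [hMH, hMdef, Matrix.mul_assoc, ← Matrix.mul_assoc U, hUu, Matrix.one_mul,
        mul_eq_one_comm.mp hWu]
    set w : A → A → ℝ := fun j i => Complex.normSq (M j i) with hwdef
    have hw0 : ∀ j i, 0 ≤ w j i := fun j i => Complex.normSq_nonneg _
    have hcol : ∀ i, ∑ j, w j i = 1 := by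
      intro i
      have h1 := congrFun (congrFun hM1 i) i
      rw [Matrix.mul_apply] at h1
      have h2 : ∀ j, Mᴴ i j * M j i = ((w j i : ℝ) : ℂ) := by
        intro j
        rw [Matrix.conjTranspose_apply, hwdef]
        exact (Complex.normSq_eq_conj_mul_self).symm
      simp only [h2] at h1
      rw [Matrix.one_apply_eq] at h1
      exact_mod_cast h1
    have hrow : ∀ j, ∑ i, w j i = 1 := by
      intro j
      have h1 := congrFun (congrFun hM2 j) j
      rw [Matrix.mul_apply] at h1
      have h2 : ∀ i, M j i * Mᴴ i j = ((w j i : ℝ) : ℂ) := by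
        intro i
        rw [Matrix.conjTranspose_apply, hwdef]
        exact Complex.mul_conj _
      simp only [h2] at h1
      rw [Matrix.one_apply_eq] at h1
      exact_mod_cast h1
    set E : A → ℝ := fun i => ∑ j, w j i * q j with hEdef
    set c : A → ℝ := fun i => ∑ j, w j i * Real.exp (-b * q j) with hcdef
    have hcz : ∑ i, c i = Z := by
      rw [hcdef, hZdef, Finset.sum_comm]
      apply Finset.sum_congr rfl
      intro j _
      rw [← Finset.sum_mul, hrow j, one_mul]
    -- trace (ρ * Q)
    have key : Matrix.trace (ρ * Q) = ((∑ i, p i * E i : ℝ) : ℂ) := by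
      have h1 : ρ * Q = U * (Matrix.diagonal (fun i => (p i : ℂ)) *
          (Mᴴ * Matrix.diagonal (fun j => (q j : ℂ)) * M)) * Uᴴ := by
        rw [hρspec, hQspec, hMH, hMdef]
        simp only [Matrix.mul_assoc]
        rw [hUu, Matrix.mul_one]
      rw [h1, aux_trace_conj' U _ hUu, Matrix.trace]
      have h2 : ∀ i : A, (Matrix.diagonal (fun i => (p i : ℂ)) *
          (Mᴴ * Matrix.diagonal (fun j => (q j : ℂ)) * M)).diag i = ((p i * E i : ℝ) : ℂ) := by
        intro i
        rw [Matrix.diag_apply, Matrix.diagonal_mul]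
        have h3 : (Mᴴ * Matrix.diagonal (fun j => (q j : ℂ)) * M) i i = ((E i : ℝ) : ℂ) := by
          rw [Matrix.mul_apply]
          have h4 : ∀ j, (Mᴴ * Matrix.diagonal fun j => (q j : ℂ)) i j * M j i =
              ((w j i * q j : ℝ) : ℂ) := by
            intro j
            have h5 : Mᴴ i j = (starRingEnd ℂ) (M j i) := rfl
            rw [Matrix.mul_diagonal, h5, mul_right_comm, ← Complex.normSq_eq_conj_mul_self]
            push_cast
            rw [hwdef]
          rw [Finset.sum_congr rfl (fun j _ => h4 j), ← Complex.ofReal_sum]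
        rw [h3]
        push_cast
        ring
      rw [Finset.sum_congr rfl (fun i _ => h2 i), ← Complex.ofReal_sum]
    -- Jensen's inequality (Peierls)
    have hjen : ∀ i, Real.exp (-b * E i) ≤ c i := by
      intro i
      have h1 := convexOn_exp.map_sum_le (t := Finset.univ) (p := fun j => -b * q j)
        (w := fun j => w j i) (fun j _ => hw0 j i) (hcol i) (fun j _ => Set.mem_univ _)
      have h2 : ∑ j, w j i • (-b * q j) = -b * E i := by
        simp only [smul_eq_mul, hEdef]
        rw [Finset.mul_sum]
        exact Finset.sum_congr rfl fun j _ => by ring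
      rw [h2] at h1
      refine h1.trans_eq ?_
      simp only [smul_eq_mul, hcdef]
    have hc0 : ∀ i, 0 < c i := fun i => lt_of_lt_of_le (Real.exp_pos _) (hjen i)
    have hlogc : ∀ i, -b * E i ≤ Real.log (c i) := by
      intro i
      rw [← Real.log_exp (-b * E i)]
      exact Real.log_le_log (Real.exp_pos _) (hjen i)
    have hterm : ∀ i, p i - c i ≤ p i * (b * E i + Real.log (p i)) := by
      intro i
      have h1 := aux_gibbs_term (hp0 i) (hc0 i)
      have h2 : p i * (Real.log (p i) - Real.log (c i)) ≤ p i * (Real.log (p i) + b * E i) := by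
        apply mul_le_mul_of_nonneg_left _ (hp0 i)
        have := hlogc i
        linarith
      calc p i - c i ≤ _ := h1
        _ ≤ _ := h2
        _ = p i * (b * E i + Real.log (p i)) := by ring
    have hpos : 0 < ∑ i, p i * (b * E i + Real.log (p i)) := by
      have h1 : ∑ i, (p i - c i) ≤ ∑ i, p i * (b * E i + Real.log (p i)) :=
        Finset.sum_le_sum fun i _ => hterm i
      rw [Finset.sum_sub_distrib, hp1, hcz] at h1
      linarith
    rw [key, Complex.ofReal_re, vnEntropy, dif_pos hρH, ← hpdef]
    rw [gt_iff_lt, inv_mul_lt_iff₀ hb]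
    have hexpand : ∑ i, p i * (b * E i + Real.log (p i)) =
        b * (∑ i, p i * E i) + ∑ i, p i * Real.log (p i) := by
      rw [Finset.mul_sum, ← Finset.sum_add_distrib]
      exact Finset.sum_congr rfl fun i _ => by ring
    rw [hexpand] at hpos
    linarith
  · -- (iii) → (ii)
    intro h
    set g : A → ℝ := fun j => Real.exp (-b * q j) / Z with hgdef
    have hg0 : ∀ j, 0 < g j := fun j => div_pos (Real.exp_pos _) hZpos
    have hgsum : ∑ j, g j = 1 := by
      rw [hgdef]
      simp only
      rw [← Finset.sum_div]
      exact div_self hZpos.ne'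
    set ρ : Matrix A A ℂ := W * Matrix.diagonal (fun j => (g j : ℂ)) * Wᴴ with hρdef
    have hden : IsDensityMatrix ρ := by
      constructor
      · exact Matrix.PosSemidef.mul_mul_conjTranspose_same
          (Matrix.PosSemidef.diagonal fun j => Complex.zero_le_real.mpr (hg0 j).le) W
      · rw [hρdef, aux_trace_conj _ hWu, ← Complex.ofReal_sum, hgsum, Complex.ofReal_one]
    have hherm : ρ.IsHermitian := hden.1.1
    have hent : vnEntropy ρ = -∑ j, g j * Real.log (g j) := by
      rw [vnEntropy, dif_pos hherm,
        aux_sum_eig hherm W hWu g hρdef (fun x => x * Real.log x)]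
    have htrρQ : (Matrix.trace (ρ * Q)).re = ∑ j, g j * q j := by
      have h1 : ρ * Q = W * (Matrix.diagonal (fun j => ((g j * q j : ℝ) : ℂ))) * Wᴴ := by
        rw [hρdef, hQspec]
        simp only [Matrix.mul_assoc]
        rw [← Matrix.mul_assoc Wᴴ W, mul_eq_one_comm.mp hWu, Matrix.one_mul]
        rw [← Matrix.mul_assoc (Matrix.diagonal _) (Matrix.diagonal _) Wᴴ,
          Matrix.diagonal_mul_diagonal]
        congr 2
        funext j
        push_cast
        ring
      rw [h1, aux_trace_conj _ hWu, ← Complex.ofReal_sum, Complex.ofReal_re]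
    have hkey := h ρ hden
    rw [htrρQ, hent] at hkey
    have hlogg : ∀ j, Real.log (g j) = -b * q j - Real.log Z := by
      intro j
      rw [hgdef]
      simp only
      rw [Real.log_div (Real.exp_pos _).ne' hZpos.ne', Real.log_exp]
    have hsum : -∑ j, g j * Real.log (g j) = b * (∑ j, g j * q j) + Real.log Z := by
      have h1 : ∑ j, g j * Real.log (g j) = ∑ j, (-b * (g j * q j) - g j * Real.log Z) := by
        refine Finset.sum_congr rfl fun j _ => ?_
        rw [hlogg j]
        ring
      rw [h1, Finset.sum_sub_distrib, ← Finset.mul_sum, ← Finset.sum_mul, hgsum, one_mul]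
      ring
    rw [hsum] at hkey
    have h2 : b⁻¹ * (b * (∑ j, g j * q j) + Real.log Z) =
        ∑ j, g j * q j + b⁻¹ * Real.log Z := by
      field_simp
    rw [h2] at hkey
    have hlogneg : Real.log Z < 0 := by
      by_contra hc
      push_neg at hc
      have h3 : 0 ≤ b⁻¹ * Real.log Z := mul_nonneg (inv_pos.mpr hb).le hc
      linarith [hkey]
    exact (Real.log_neg_iff hZpos).mp hlogneg
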